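/- Let E be a finite-dimensional real vector space, π₀ : E* → E a skew-symmetric linear map, and Q : E → E a linear automorphism with Q ∘ π₀ ∘ Qᵀ = π₀, where Qᵀ : E* → E* is the transpose of Q. Let W_per = { (λ,φ) ∈ W(E) : λ(1) = Q(λ(0)) and φ(0) = Qᵀ(φ(1)) } and V_per = { (λ,φ) ∈ W_per : λ(u) = λ(0) − π₀(∫₀ᵘ φ(s) ds) for all u ∈ [0,1] }. Then the Ω-orthogonal of V_per taken within W_per is contained in V_per; that is, V_per is coisotropic in (W_per, Ω). -/

import Mathlib

open MeasureTheory Set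

/-- An element of `W(E)`: a pair `(λ, φ)` of continuous maps on `[0,1]` with values in `E`
and in the dual `E* = E →L[ℝ] ℝ` respectively. -/
structure WPair (E : Type*) [NormedAddCommGroup E] [NormedSpace ℝ E] where
  lam : ℝ → E
  phi : ℝ → E →L[ℝ] ℝ
  lam_cont : ContinuousOn lam (Icc 0 1)
  phi_cont : ContinuousOn phi (Icc 0 1)

/-- The alternating bilinear form `Ω((λ,φ),(λ',φ')) = ∫₀¹ (φ(u)(λ'(u)) − φ'(u)(λ(u))) du`. -/
noncomputable def Omega {E : Type*} [NormedAddCommGroup E] [NormedSpace ℝ E]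
    (w w' : WPair E) : ℝ :=
  ∫ u in (0:ℝ)..(1:ℝ), (w.phi u (w'.lam u) - w'.phi u (w.lam u))

/-- The `Ω`-orthogonal of a subset `A` taken within a subset `W'` of `W(E)`. -/
def orthWithin {E : Type*} [NormedAddCommGroup E] [NormedSpace ℝ E]
    (W' A : Set (WPair E)) : Set (WPair E) :=
  {w ∈ W' | ∀ a ∈ A, Omega a w = 0}

/-- The "periodic" (twisted by the monodromy `Q`) subspace `W_per` of `W(E)`. -/
def WPer {E : Type*} [NormedAddCommGroup E] [NormedSpace ℝ E]
    (Q : E ≃L[ℝ] E) : Set (WPair E) :=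
  {w | w.lam 1 = Q (w.lam 0) ∧ w.phi 0 = (w.phi 1).comp (Q : E →L[ℝ] E)}

/-- The subspace `V_per ⊆ W_per` of solutions of `λ(u) = λ(0) − π₀ ∫₀ᵘ φ`. -/
noncomputable def VPer {E : Type*} [NormedAddCommGroup E] [NormedSpace ℝ E]
    (π₀ : (E →L[ℝ] ℝ) →ₗ[ℝ] E) (Q : E ≃L[ℝ] E) : Set (WPair E) :=
  {w ∈ WPer Q | ∀ u ∈ Icc (0:ℝ) 1, w.lam u = w.lam 0 - π₀ (∫ s in (0:ℝ)..u, w.phi s)}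


section AuxLemmas

lemma prim_hasDerivAt {F : Type*} [NormedAddCommGroup F] [NormedSpace ℝ F]
    [CompleteSpace F] {f : ℝ → F} (hf : Continuous f) (u : ℝ) :
    HasDerivAt (fun v => ∫ s in (0:ℝ)..v, f s) (f u) u :=
  intervalIntegral.integral_hasDerivAt_right (hf.intervalIntegrable _ _)
    (hf.stronglyMeasurableAtFilter _ _) hf.continuousAt

lemma zero_of_integral_zero {g : ℝ → ℝ} (hg : Continuous g)
    (hnn : ∀ x ∈ Icc (0:ℝ) 1, 0 ≤ g x) (hint : (∫ u in (0:ℝ)..1, g u) = 0) :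
    ∀ x ∈ Icc (0:ℝ) 1, g x = 0 := by
  intro x hx
  by_contra hne
  have hpos : 0 < g x := lt_of_le_of_ne (hnn x hx) (Ne.symm hne)
  obtain ⟨δ, hδ, hball⟩ := Metric.continuousAt_iff.mp hg.continuousAt (g x / 2) (by linarith)
  set a := max 0 (x - δ/2) with ha
  set b := min 1 (x + δ/2) with hb
  have ha0 : 0 ≤ a := le_max_left _ _
  have hb1 : b ≤ 1 := min_le_left _ _
  have ha1 : a ≤ 1 := max_le (by norm_num) (by linarith [hx.2])
  have hb0 : 0 ≤ b := le_min (by norm_num) (by linarith [hx.1])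
  have hab : a < b := max_lt (lt_min (by norm_num) (by linarith [hx.1]))
    (lt_min (by linarith [hx.2]) (by linarith))
  have hmid : ∀ y ∈ Icc a b, g x / 2 ≤ g y := by
    intro y hy
    have h1 : x - δ/2 ≤ y := le_trans (le_max_right _ _) hy.1
    have h2 : y ≤ x + δ/2 := le_trans hy.2 (min_le_right _ _)
    have : dist (g y) (g x) < g x / 2 := by
      apply hball
      rw [Real.dist_eq, abs_lt]; constructor <;> linarith
    rw [Real.dist_eq, abs_lt] at this
    linarith [this.1]
  have i1 : (0:ℝ) ≤ ∫ u in (0:ℝ)..a, g u :=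
    intervalIntegral.integral_nonneg ha0 (fun u hu => hnn u ⟨hu.1, le_trans hu.2 ha1⟩)
  have i3 : (0:ℝ) ≤ ∫ u in b..1, g u :=
    intervalIntegral.integral_nonneg hb1 (fun u hu => hnn u ⟨le_trans hb0 hu.1, hu.2⟩)
  have i2 : (b - a) * (g x / 2) ≤ ∫ u in a..b, g u := by
    have := intervalIntegral.integral_mono_on (μ := volume) hab.le
      (intervalIntegrable_const (c := g x / 2)) (hg.intervalIntegrable a b) hmid
    rw [intervalIntegral.integral_const] at this
    simpa [smul_eq_mul] using this
  have e1 : (∫ u in (0:ℝ)..a, g u) + ∫ u in a..b, g u = ∫ u in (0:ℝ)..b, g u :=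
    intervalIntegral.integral_add_adjacent_intervals (hg.intervalIntegrable _ _)
      (hg.intervalIntegrable _ _)
  have e2 : (∫ u in (0:ℝ)..b, g u) + ∫ u in b..(1:ℝ), g u = ∫ u in (0:ℝ)..1, g u :=
    intervalIntegral.integral_add_adjacent_intervals (hg.intervalIntegrable _ _)
      (hg.intervalIntegrable _ _)
  have hba : 0 < (b - a) * (g x / 2) := by
    apply mul_pos <;> linarith
  linarith

lemma dbr {k : ℝ → ℝ} (hk : Continuous k)
    (H : ∀ f : ℝ → ℝ, Continuous f → f 0 = 0 → f 1 = 0 →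
      (∫ u in (0:ℝ)..1, f u) = 0 → (∫ u in (0:ℝ)..1, f u * k u) = 0) :
    ∀ u ∈ Icc (0:ℝ) 1, k u = k 0 := by
  set ρ : ℝ → ℝ := fun u => 6*u - 6*u^2 with hρ
  have hρval : ∀ u, ρ u = 6*u - 6*u^2 := fun u => rfl
  have hρcont : Continuous ρ := by fun_prop
  have hρint : (∫ u in (0:ℝ)..1, ρ u) = 1 := by
    rw [hρ]
    rw [intervalIntegral.integral_sub ((by fun_prop : Continuous fun u:ℝ => 6*u).intervalIntegrable _ _)
      ((by fun_prop : Continuous fun u:ℝ => 6*u^2).intervalIntegrable _ _),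
      intervalIntegral.integral_const_mul, intervalIntegral.integral_const_mul,
      integral_id, integral_pow]
    norm_num
  have hρ0 : ρ 0 = 0 := by rw [hρval]; ring
  have hρ1 : ρ 1 = 0 := by rw [hρval]; ring
  set d : ℝ := ∫ u in (0:ℝ)..1, ρ u * k u with hd
  have hkey : ∀ f : ℝ → ℝ, Continuous f → f 0 = 0 → f 1 = 0 →
      (∫ u in (0:ℝ)..1, f u * k u) = (∫ u in (0:ℝ)..1, f u) * d := by
    intro f hf h0 h1
    set c : ℝ := ∫ u in (0:ℝ)..1, f u with hc
    have hsub := H (fun u => f u - c * ρ u) (by fun_prop) (by simp [h0, hρ0])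
      (by simp [h1, hρ1])
      (by show (∫ u in (0:ℝ)..1, (f u - c * ρ u)) = 0
          rw [intervalIntegral.integral_sub (hf.intervalIntegrable _ _)
            ((show Continuous (fun u => c * ρ u) from continuous_const.mul hρcont).intervalIntegrable _ _),
            intervalIntegral.integral_const_mul, hρint, ← hc]; ring)
    have hexp : (fun u => (f u - c * ρ u) * k u)
        = fun u => f u * k u - c * (ρ u * k u) := funext fun u => by ring
    rw [hexp, intervalIntegral.integral_sub ((show Continuous (fun u => f u * k u) from hf.mul hk).intervalIntegrable _ _)
      ((show Continuous (fun u => c * (ρ u * k u)) from continuous_const.mul (hρcont.mul hk)).intervalIntegrable _ _),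
      intervalIntegral.integral_const_mul, ← hd] at hsub
    linarith
  have hIoo : ∀ x ∈ Icc (0:ℝ) 1, ρ x * (k x - d)^2 = 0 := by
    apply zero_of_integral_zero (by fun_prop)
    · intro x hx
      apply mul_nonneg _ (sq_nonneg _)
      rw [hρval]
      nlinarith [hx.1, hx.2]
    · have h1 := hkey (fun u => ρ u * (k u - d)) (by fun_prop)
        (by simp [hρ0]) (by simp [hρ1])
      have hexp : (fun u => ρ u * (k u - d)^2)
          = fun u => (ρ u * (k u - d)) * k u - (ρ u * (k u - d)) * d := funext fun u => by ring
      rw [hexp, intervalIntegral.integral_sub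
        ((by fun_prop : Continuous fun u => ρ u * (k u - d) * k u).intervalIntegrable _ _)
        ((by fun_prop : Continuous fun u => ρ u * (k u - d) * d).intervalIntegrable _ _),
        intervalIntegral.integral_mul_const, h1]
      ring
  have hIcc : ∀ u ∈ Icc (0:ℝ) 1, k u = d := by
    have hIoo' : ∀ x ∈ Ioo (0:ℝ) 1, k x = d := by
      intro x hx
      have h := hIoo x (Ioo_subset_Icc_self hx)
      have hρx : 0 < ρ x := by rw [hρval]; nlinarith [hx.1, hx.2]
      have hsq : (k x - d)^2 = 0 := by
        rcases mul_eq_zero.mp h with h' | h'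
        · exact absurd h' hρx.ne'
        · exact h'
      have := pow_eq_zero_iff (n := 2) (by norm_num) |>.mp hsq
      linarith [sub_eq_zero.mp this]
    intro u hu
    have hclo : u ∈ closure (Ioo (0:ℝ) 1) := by
      rw [closure_Ioo (by norm_num : (0:ℝ) ≠ 1)]; exact hu
    haveI : (nhdsWithin u (Ioo (0:ℝ) 1)).NeBot := mem_closure_iff_nhdsWithin_neBot.mp hclo
    have t1 : Filter.Tendsto k (nhdsWithin u (Ioo (0:ℝ) 1)) (nhds (k u)) :=
      hk.continuousAt.continuousWithinAt
    have t2 : Filter.Tendsto k (nhdsWithin u (Ioo (0:ℝ) 1)) (nhds d) :=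
      Filter.Tendsto.congr' (eventually_nhdsWithin_of_forall fun x hx => (hIoo' x hx).symm)
        tendsto_const_nhds
    exact tendsto_nhds_unique t1 t2
  intro u hu
  rw [hIcc u hu, hIcc 0 ⟨le_refl 0, by norm_num⟩]

end AuxLemmas

theorem VPer_coisotropic
    (E : Type*) [NormedAddCommGroup E] [NormedSpace ℝ E] [FiniteDimensional ℝ E]
    (π₀ : (E →L[ℝ] ℝ) →ₗ[ℝ] E)
    (hskew : ∀ α β : E →L[ℝ] ℝ, α (π₀ β) = - β (π₀ α))
    (Q : E ≃L[ℝ] E)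
    (hQ : ∀ α : E →L[ℝ] ℝ, Q (π₀ (α.comp (Q : E →L[ℝ] E))) = π₀ α) :
    orthWithin (WPer Q) (VPer π₀ Q) ⊆ VPer π₀ Q := by
  rintro w ⟨hwW, horth⟩
  have h01 : (0:ℝ) ≤ 1 := by norm_num
  -- continuous extensions of w.lam and w.phi to all of ℝ
  set lamE : ℝ → E := IccExtend h01 ((Icc (0:ℝ) 1).restrict w.lam) with hlamEdef
  set phiE : ℝ → E →L[ℝ] ℝ := IccExtend h01 ((Icc (0:ℝ) 1).restrict w.phi) with hphiEdef
  have hlamE : Continuous lamE := (continuousOn_iff_continuous_restrict.mp w.lam_cont).Icc_extend'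
  have hphiE : Continuous phiE := (continuousOn_iff_continuous_restrict.mp w.phi_cont).Icc_extend'
  have hlam_eq : ∀ x ∈ Icc (0:ℝ) 1, lamE x = w.lam x := fun x hx => by
    rw [hlamEdef, IccExtend_of_mem h01 _ hx]; rfl
  have hphi_eq : ∀ x ∈ Icc (0:ℝ) 1, phiE x = w.phi x := fun x hx => by
    rw [hphiEdef, IccExtend_of_mem h01 _ hx]; rfl
  -- the primitive of phiE
  set G : ℝ → E →L[ℝ] ℝ := fun u => ∫ s in (0:ℝ)..u, phiE s with hGdef
  have hG : ∀ u, HasDerivAt G (phiE u) u := prim_hasDerivAt hphiE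
  have hGcont : Continuous G := continuous_iff_continuousAt.mpr fun u =>
    (hG u).continuousAt
  have hG0 : G 0 = 0 := intervalIntegral.integral_same
  -- the key integral identity coming from testing against elements of V_per
  have key : ∀ (α : E →L[ℝ] ℝ) (f : ℝ → ℝ), Continuous f → f 0 = 0 → f 1 = 0 →
      (∫ u in (0:ℝ)..1, f u) = 0 →
      (∫ u in (0:ℝ)..1, f u * α (lamE u + π₀ (G u))) = 0 := by
    intro α f hf hf0 hf1 hfint
    set F : ℝ → ℝ := fun u => ∫ s in (0:ℝ)..u, f s with hFdef
    have hF : ∀ u, HasDerivAt F (f u) u := prim_hasDerivAt hf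
    have hFcont : Continuous F := continuous_iff_continuousAt.mpr fun u =>
      (hF u).continuousAt
    have hF0 : F 0 = 0 := intervalIntegral.integral_same
    have hF1 : F 1 = 0 := hfint
    set a : WPair E :=
      { lam := fun u => -(F u • π₀ α)
        phi := fun u => f u • α
        lam_cont := ((hFcont.smul continuous_const).neg).continuousOn
        phi_cont := (hf.smul continuous_const).continuousOn } with hadef
    have haV : a ∈ VPer π₀ Q := by
      refine ⟨⟨?_, ?_⟩, ?_⟩
      · show -(F 1 • π₀ α) = Q (-(F 0 • π₀ α))
        simp [hF0, hF1]
      · show f 0 • α = (f 1 • α).comp (Q : E →L[ℝ] E)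
        simp [hf0, hf1]
      · intro u hu
        show -(F u • π₀ α) = -(F 0 • π₀ α) - π₀ (∫ s in (0:ℝ)..u, f s • α)
        rw [intervalIntegral.integral_smul_const, LinearMap.map_smul, hF0]
        simp
        rfl
    have hOmega := horth a haV
    -- rewrite Omega a w
    have hOmega' : (∫ u in (0:ℝ)..1,
        (f u * α (lamE u) + F u * (phiE u (π₀ α)))) = 0 := by
      have hOmega2 : (∫ u in (0:ℝ)..(1:ℝ),
          (a.phi u (w.lam u) - w.phi u (a.lam u))) = 0 := hOmega
      have hcg : (∫ u in (0:ℝ)..(1:ℝ), (a.phi u (w.lam u) - w.phi u (a.lam u)))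
          = ∫ u in (0:ℝ)..1, (f u * α (lamE u) + F u * (phiE u (π₀ α))) := by
        refine intervalIntegral.integral_congr fun u hu => ?_
        rw [uIcc_of_le h01] at hu
        show (f u • α) (w.lam u) - w.phi u (-(F u • π₀ α))
            = f u * α (lamE u) + F u * (phiE u (π₀ α))
        rw [← hlam_eq u hu, ← hphi_eq u hu]
        simp [ContinuousLinearMap.smul_apply]
      rw [← hcg]
      exact hOmega2
    -- integration by parts
    have hGa_cont : Continuous fun u => G u (π₀ α) :=
      hGcont.clm_apply continuous_const
    have hpa_cont : Continuous fun u => phiE u (π₀ α) :=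
      hphiE.clm_apply continuous_const
    have hIBP : (∫ u in (0:ℝ)..1,
        (f u * (G u (π₀ α)) + F u * (phiE u (π₀ α)))) = 0 := by
      have hB : ∀ u ∈ uIcc (0:ℝ) 1, HasDerivAt (fun v => F v * (G v (π₀ α)))
          (f u * (G u (π₀ α)) + F u * (phiE u (π₀ α))) u := by
        intro u _
        have h1 : HasDerivAt (fun v => G v (π₀ α)) (phiE u (π₀ α)) u := by
          have := (hG u).clm_apply (hasDerivAt_const u (π₀ α))
          simpa using this
        exact (hF u).mul h1
      rw [intervalIntegral.integral_eq_sub_of_hasDerivAt hB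
        (((hf.mul hGa_cont).add (hFcont.mul hpa_cont)).intervalIntegrable _ _)]
      simp [hF0, hF1]
    -- combine
    have hcomb : (∫ u in (0:ℝ)..1, f u * (α (lamE u) - G u (π₀ α))) = 0 := by
      have hexp : (fun u => f u * (α (lamE u) - G u (π₀ α)))
          = fun u => (f u * α (lamE u) + F u * (phiE u (π₀ α)))
            - (f u * (G u (π₀ α)) + F u * (phiE u (π₀ α))) := funext fun u => by ring
      have hc1 : Continuous fun u => α (lamE u) := α.continuous.comp hlamE
      rw [hexp, intervalIntegral.integral_sub
        ((show Continuous (fun u => f u * α (lamE u) + F u * (phiE u (π₀ α))) from (hf.mul hc1).add (hFcont.mul hpa_cont)).intervalIntegrable _ _)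
        ((show Continuous (fun u => f u * (G u (π₀ α)) + F u * (phiE u (π₀ α))) from (hf.mul hGa_cont).add (hFcont.mul hpa_cont)).intervalIntegrable _ _),
        hOmega', hIBP, sub_zero]
    -- use skew-symmetry
    have hptwise : ∀ u, α (lamE u) - G u (π₀ α) = α (lamE u + π₀ (G u)) := by
      intro u
      rw [hskew (G u) α, map_add]
      ring
    exact Eq.trans
      (intervalIntegral.integral_congr fun u _ => by rw [← hptwise u]) hcomb
  -- continuity of π₀ ∘ G
  have hπG : Continuous fun u => π₀ (G u) := by
    have : (fun u => π₀ (G u)) = fun u => (LinearMap.toContinuousLinearMap π₀) (G u) := by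
      funext u
      rw [LinearMap.coe_toContinuousLinearMap']
    rw [this]
    exact (LinearMap.toContinuousLinearMap π₀).continuous.comp hGcont
  -- each dual pairing is constant
  have hconst : ∀ (α : E →L[ℝ] ℝ), ∀ u ∈ Icc (0:ℝ) 1,
      α (lamE u + π₀ (G u)) = α (lamE 0 + π₀ (G 0)) := by
    intro α
    have hkcont : Continuous fun u => α (lamE u + π₀ (G u)) :=
      α.continuous.comp (hlamE.add hπG)
    exact dbr hkcont (fun f hf h0 h1 hint => key α f hf h0 h1 hint)
  -- conclude
  refine ⟨hwW, ?_⟩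
  intro u hu
  have h0mem : (0:ℝ) ∈ Icc (0:ℝ) 1 := ⟨le_refl 0, h01⟩
  have hx : lamE u + π₀ (G u) - lamE 0 = 0 := by
    rw [← Module.forall_dual_apply_eq_zero_iff ℝ (lamE u + π₀ (G u) - lamE 0)]
    intro ψ
    have hα := hconst (LinearMap.toContinuousLinearMap ψ) u hu
    rw [LinearMap.coe_toContinuousLinearMap'] at hα
    rw [hG0, map_zero, add_zero] at hα
    rw [map_sub, hα, sub_self]
  have hGu : G u = ∫ s in (0:ℝ)..u, w.phi s := by
    refine intervalIntegral.integral_congr fun s hs => ?_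
    rw [uIcc_of_le hu.1] at hs
    exact hphi_eq s ⟨hs.1, le_trans hs.2 hu.2⟩
  rw [← hGu, ← hlam_eq u hu, ← hlam_eq 0 h0mem]
  have := eq_of_sub_eq_zero hx
  rw [eq_sub_iff_add_eq]
  exact this
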